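/- arXiv:2511.22086 — 8 statements merged into one kernel-verified Lean document; each statement's English description precedes it below -/
import Mathlib

section
/- Let a, t, l be positive integers with a odd. If at least one of t/gcd(t,l) and l/gcd(t,l) is even, then gcd(a^t + 1, a^l + 1) = 2; if both t/gcd(t,l) and l/gcd(t,l) are odd, then gcd(a^t + 1, a^l + 1) = a^gcd(t,l) + 1. -/
open Finset

private lemma aux_iff (m x k : ℕ) : ((m:ℤ) ∣ (x:ℤ)^k - 1) ↔ ((x : ZMod m))^k = 1 := by
  rw [← ZMod.intCast_zmod_eq_zero_iff_dvd]
  push_cast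
  rw [sub_eq_zero]

private lemma gdvd (a t l : ℕ) :
    ((Nat.gcd (a ^ t + 1) (a ^ l + 1) : ℤ)) ∣ (a:ℤ)^(2 * Nat.gcd t l) - 1 := by
  set g := Nat.gcd (a ^ t + 1) (a ^ l + 1) with hg
  have hgt : (g:ℤ) ∣ (a:ℤ)^t + 1 := by
    exact_mod_cast Int.natCast_dvd_natCast.mpr (Nat.gcd_dvd_left _ _)
  have hgl : (g:ℤ) ∣ (a:ℤ)^l + 1 := by
    exact_mod_cast Int.natCast_dvd_natCast.mpr (Nat.gcd_dvd_right _ _)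
  have h1 : (g:ℤ) ∣ (a:ℤ)^(2*t) - 1 := by
    have : ((a:ℤ)^t + 1) * ((a:ℤ)^t - 1) = (a:ℤ)^(2*t) - 1 := by
      rw [two_mul, pow_add]; ring
    exact this ▸ hgt.mul_right _
  have h2 : (g:ℤ) ∣ (a:ℤ)^(2*l) - 1 := by
    have : ((a:ℤ)^l + 1) * ((a:ℤ)^l - 1) = (a:ℤ)^(2*l) - 1 := by
      rw [two_mul, pow_add]; ring
    exact this ▸ hgl.mul_right _
  rw [aux_iff] at h1 h2 ⊢
  rw [← Nat.gcd_mul_left]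
  exact pow_gcd_eq_one.mpr ⟨h1, h2⟩

private lemma case_even (a t l : ℕ) (ha : Odd a) (ht : 0 < t) (hl : 0 < l)
    (he : Even (t / Nat.gcd t l)) : Nat.gcd (a ^ t + 1) (a ^ l + 1) = 2 := by
  set d := Nat.gcd t l with hd
  set g := Nat.gcd (a ^ t + 1) (a ^ l + 1) with hg
  obtain ⟨k, hk⟩ := he
  have htdk : t = 2 * d * k := by
    have h1 : d * (t / d) = t := Nat.mul_div_cancel' (Nat.gcd_dvd_left t l)
    rw [← h1, hk]; ring
  have h2d := gdvd a t l
  have h3 : (g:ℤ) ∣ (a:ℤ)^t - 1 := by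
    refine h2d.trans ?_
    have := sub_dvd_pow_sub_pow ((a:ℤ)^(2*d)) 1 k
    simpa [← pow_mul, ← htdk] using this
  have h4 : (g:ℤ) ∣ (a:ℤ)^t + 1 := by
    exact_mod_cast Int.natCast_dvd_natCast.mpr (Nat.gcd_dvd_left _ _)
  have h5 : (g:ℤ) ∣ 2 := by
    have := dvd_sub h4 h3
    simpa using this
  have h6 : g ∣ 2 := by exact_mod_cast h5
  have h7 : 2 ∣ g := by
    refine Nat.dvd_gcd ?_ ?_ <;> exact (Odd.add_one (ha.pow)).two_dvd
  exact Nat.dvd_antisymm h6 h7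

theorem stmt_1 (a t l : ℕ) (ha : 0 < a) (ht : 0 < t) (hl : 0 < l) (hodd : Odd a) :
    ((Even (t / Nat.gcd t l) ∨ Even (l / Nat.gcd t l)) →
      Nat.gcd (a ^ t + 1) (a ^ l + 1) = 2) ∧
    ((Odd (t / Nat.gcd t l) ∧ Odd (l / Nat.gcd t l)) →
      Nat.gcd (a ^ t + 1) (a ^ l + 1) = a ^ Nat.gcd t l + 1) := by
  constructor
  · rintro (h | h)
    · exact case_even a t l hodd ht hl h
    · rw [Nat.gcd_comm]
      rw [Nat.gcd_comm t l] at h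
      exact case_even a l t hodd hl ht h
  · rintro ⟨hu, hv⟩
    set d := Nat.gcd t l with hd
    set g := Nat.gcd (a ^ t + 1) (a ^ l + 1) with hg
    have hdpos : 0 < d := Nat.gcd_pos_of_pos_left _ ht
    have htd : t = d * (t / d) := (Nat.mul_div_cancel' (Nat.gcd_dvd_left t l)).symm
    have hld : l = d * (l / d) := (Nat.mul_div_cancel' (Nat.gcd_dvd_right t l)).symm
    set u := t / d with hu'
    set v := l / d with hv'
    -- a^d + 1 divides both
    have h1t : a ^ d + 1 ∣ a ^ t + 1 := by
      have := hu.nat_add_dvd_pow_add_pow (a ^ d) 1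
      simpa [← pow_mul, ← htd] using this
    have h1l : a ^ d + 1 ∣ a ^ l + 1 := by
      have := hv.nat_add_dvd_pow_add_pow (a ^ d) 1
      simpa [← pow_mul, ← hld] using this
    have hAg : a ^ d + 1 ∣ g := Nat.dvd_gcd h1t h1l
    -- notation
    set X : ℤ := (a:ℤ)^d with hX
    have h2d := gdvd a t l
    have h2d' : (g:ℤ) ∣ (X - 1) * (X + 1) := by
      refine h2d.trans (dvd_of_eq ?_)
      rw [← hd, hX, two_mul, pow_add]; ring
    -- e := gcd(g, X-1) divides 2
    set e := Int.gcd (g:ℤ) (X - 1) with he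
    have hgt : (g:ℤ) ∣ X^u + 1 := by
      have : (g:ℤ) ∣ (a:ℤ)^t + 1 := by
        exact_mod_cast Int.natCast_dvd_natCast.mpr (Nat.gcd_dvd_left _ _)
      rwa [htd, pow_mul] at this
    have he2 : (e:ℤ) ∣ 2 := by
      have hea : (e:ℤ) ∣ X^u + 1 := (Int.gcd_dvd_left _ _).trans hgt
      have heb : (e:ℤ) ∣ X^u - 1 := by
        refine (Int.gcd_dvd_right _ _).trans ?_
        simpa using sub_dvd_pow_sub_pow X 1 u
      have := dvd_sub hea heb
      simpa using this
    -- g ∣ e * (a^d+1)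
    have hkey : (g:ℤ) ∣ ((e : ℤ) * ((a:ℕ)^d + 1 : ℕ)) := by
      have hg1 : (g:ℤ) ∣ (g:ℤ) * (X + 1) := Dvd.intro _ rfl
      have := Int.dvd_gcd hg1 h2d'
      rw [Int.gcd_mul_right] at this
      have hnat : (X + 1).natAbs = a ^ d + 1 := by
        have hx1 : X + 1 = ((a ^ d + 1 : ℕ) : ℤ) := by rw [hX]; push_cast; ring
        rw [hx1, Int.natAbs_natCast]
      rw [hnat] at this
      exact_mod_cast this
    have hkey2 : g ∣ e * (a ^ d + 1) := by exact_mod_cast hkey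
    have hkey3 : g ∣ 2 * (a ^ d + 1) := by
      refine hkey2.trans (mul_dvd_mul ?_ dvd_rfl)
      exact_mod_cast he2
    -- write g = (a^d+1) * c
    obtain ⟨c, hc⟩ := hAg
    have hcd : c ∣ 2 := by
      have : (a ^ d + 1) * c ∣ (a ^ d + 1) * 2 := by
        rw [← hc, mul_comm (a^d+1) 2]; exact hkey3
      exact (Nat.mul_dvd_mul_iff_left (Nat.succ_pos _)).mp this
    -- geometric sum T
    set T : ℤ := ∑ i ∈ range u, (-X)^i with hT
    have hTid : (X + 1) * T = X^u + 1 := by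
      have := geom_sum_mul (-X) u
      have hou : Odd u := hu
      rw [hou.neg_pow] at this
      have : T * (-X - 1) = -X^u - 1 := this
      linarith [this]
    have hTodd : ¬ (2:ℤ) ∣ T := by
      intro h2T
      have h0 : ((T : ℤ) : ZMod 2) = 0 := (ZMod.intCast_zmod_eq_zero_iff_dvd T 2).mpr h2T
      have ha2 : ((a : ℕ) : ZMod 2) = 1 := by
        obtain ⟨j, hj⟩ := hodd
        rw [hj]
        push_cast
        rw [show ((2:ZMod 2)) = 0 by decide]
        ring
      have hXz : ((X : ℤ) : ZMod 2) = 1 := by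
        rw [hX]; push_cast; rw [ha2, one_pow]
      rw [hT] at h0
      push_cast at h0
      rw [hXz] at h0
      have hone : ∀ i ∈ range u, ((-1 : ZMod 2)) ^ i = 1 := by
        intro i _
        rw [show (-1 : ZMod 2) = 1 by decide, one_pow]
      rw [Finset.sum_congr rfl hone] at h0
      simp only [Finset.sum_const, Finset.card_range, nsmul_eq_mul, mul_one] at h0
      have h2u : (2:ℕ) ∣ u := (ZMod.natCast_eq_zero_iff u 2).mp h0
      exact (Nat.not_even_iff_odd.mpr hu) (even_iff_two_dvd.mpr h2u)
    -- conclude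
    rcases (Nat.prime_two.eq_one_or_self_of_dvd c hcd) with hc1 | hc2
    · rw [hc, hc1, mul_one]
    · exfalso
      have hgdvd : g ∣ a ^ t + 1 := Nat.gcd_dvd_left _ _
      have : (a ^ d + 1) * 2 ∣ a ^ t + 1 := by
        rw [← hc2, ← hc]; exact hgdvd
      have hZ : (X + 1) * 2 ∣ X ^ u + 1 := by
        rw [hX]
        have h' := Int.natCast_dvd_natCast.mpr this
        push_cast at h'
        rwa [htd, pow_mul] at h'
      rw [← hTid] at hZ
      have hXpos : X + 1 ≠ 0 := by
        rw [hX]; positivity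
      exact hTodd ((mul_dvd_mul_iff_left hXpos).mp hZ)
end

section
/- Let p be a prime, m a positive integer, and 1 ≤ v ≤ p^m - 2. If gcd(v, p^m - 1) < p, then the p-cyclotomic coset of v modulo p^m - 1 has size m; that is, the smallest positive integer l with v·p^l ≡ v (mod p^m - 1) is l = m. -/
theorem stmt_5 (p m v : ℕ) (hp : p.Prime) (hm : 0 < m)
    (hv1 : 1 ≤ v) (hv2 : v ≤ p ^ m - 2)
    (hgcd : Nat.gcd v (p ^ m - 1) < p) :
    IsLeast {l : ℕ | 0 < l ∧ v * p ^ l ≡ v [MOD p ^ m - 1]} m := by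
  have hp2 : 2 ≤ p := hp.two_le
  have hn1 : 1 ≤ p ^ m := Nat.one_le_pow _ _ (by omega)
  constructor
  · refine ⟨hm, ?_⟩
    have h1 : (1 : ℕ) ≡ p ^ m [MOD p ^ m - 1] := (Nat.modEq_iff_dvd' hn1).mpr dvd_rfl
    calc v * p ^ m ≡ v * 1 [MOD p ^ m - 1] := Nat.ModEq.mul_left v h1.symm
      _ = v := mul_one v
  · rintro l ⟨hl, hmod⟩
    by_contra h
    push_neg at h
    have hpl : 2 ≤ p ^ l := by
      calc 2 = 2 ^ 1 := rfl
        _ ≤ p ^ l := Nat.pow_le_pow_left hp2 1 |>.trans (Nat.pow_le_pow_right (by omega) hl)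
    have hdvd : p ^ m - 1 ∣ v * (p ^ l - 1) := by
      have h2 : p ^ m - 1 ∣ v * p ^ l - v :=
        (Nat.modEq_iff_dvd' (Nat.le_mul_of_pos_right v (by omega))).mp hmod.symm
      have h3 : v * p ^ l - v = v * (p ^ l - 1) := by
        rw [Nat.mul_sub, mul_one]
      rwa [h3] at h2
    set d := Nat.gcd v (p ^ m - 1) with hd
    have hd1 : 0 < d := Nat.gcd_pos_of_pos_left _ hv1
    have hdn : d ∣ p ^ m - 1 := Nat.gcd_dvd_right _ _
    have hdv : d ∣ v := Nat.gcd_dvd_left _ _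
    have hcop : (v / d).Coprime ((p ^ m - 1) / d) := Nat.coprime_div_gcd_div_gcd hd1
    have h4 : (p ^ m - 1) / d ∣ (v / d) * (p ^ l - 1) := by
      have h5 : d * ((p ^ m - 1) / d) ∣ d * ((v / d) * (p ^ l - 1)) := by
        rw [← Nat.mul_assoc, Nat.mul_div_cancel' hdv, Nat.mul_div_cancel' hdn]
        exact hdvd
      exact (mul_dvd_mul_iff_left (by omega : d ≠ 0)).mp h5
    have h6 : (p ^ m - 1) / d ∣ p ^ l - 1 :=
      (Nat.Coprime.dvd_of_dvd_mul_left hcop.symm h4)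
    have h7 : (p ^ m - 1) / d ≤ p ^ l - 1 := Nat.le_of_dvd (by omega) h6
    have key : p ^ m - 1 ≤ d * (p ^ l - 1) := by
      calc p ^ m - 1 = d * ((p ^ m - 1) / d) := (Nat.mul_div_cancel' hdn).symm
        _ ≤ d * (p ^ l - 1) := Nat.mul_le_mul_left d h7
    have key2 : p ^ m - 1 ≤ (p - 1) * (p ^ l - 1) := by
      exact key.trans (Nat.mul_le_mul_right _ (by omega))
    have hpow : p * p ^ l ≤ p ^ m := by
      rw [← pow_succ']
      exact Nat.pow_le_pow_right (by omega) (by omega)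
    zify [show 1 ≤ p ^ m from hn1, show 1 ≤ p from by omega,
      show 1 ≤ p ^ l from by omega] at key2
    have hplz : (2 : ℤ) ≤ (p : ℤ) ^ l := by exact_mod_cast hpl
    have hpowz : (p : ℤ) * (p : ℤ) ^ l ≤ (p : ℤ) ^ m := by exact_mod_cast hpow
    have hp2z : (2 : ℤ) ≤ (p : ℤ) := by exact_mod_cast hp2
    nlinarith [key2, hplz, hpowz, hp2z]
end

section
/- Let p ≥ 5 be prime, m a positive integer, and let h, k be nonnegative integers with gcd(h + k, m) = 1 and gcd(h - k, m) = 1. If v satisfies v(p^k + 1) ≡ p^h + 1 (mod p^m - 1), then gcd(p^h - v, p^m - 1) divides p - 1 and gcd(v - 1, p^m - 1) divides p - 1. -/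
private lemma aux_gcd_one (p a m d : ℕ) (hg : Nat.gcd a m = 1)
    (h1 : (d : ℤ) ∣ (p : ℤ) ^ a - 1) (h2 : (d : ℤ) ∣ (p : ℤ) ^ m - 1) :
    (d : ℤ) ∣ (p : ℤ) - 1 := by
  have e1 : ((p : ZMod d)) ^ a = 1 := by
    have := (ZMod.intCast_zmod_eq_zero_iff_dvd _ d).mpr h1
    push_cast at this
    exact sub_eq_zero.mp this
  have e2 : ((p : ZMod d)) ^ m = 1 := by
    have := (ZMod.intCast_zmod_eq_zero_iff_dvd _ d).mpr h2
    push_cast at this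
    exact sub_eq_zero.mp this
  have : (p : ZMod d) ^ Nat.gcd a m = 1 := pow_gcd_eq_one.mpr ⟨e1, e2⟩
  rw [hg, pow_one] at this
  have : (((p : ℤ) - 1 : ℤ) : ZMod d) = 0 := by push_cast; rw [this]; ring
  exact (ZMod.intCast_zmod_eq_zero_iff_dvd _ d).mp this

private lemma aux_pow_sub (p a b m d : ℕ) (hm : 0 < m) (hab : a ≤ b)
    (hg : Nat.gcd (b - a) m = 1)
    (h1 : (d : ℤ) ∣ (p : ℤ) ^ b - (p : ℤ) ^ a) (h2 : (d : ℤ) ∣ (p : ℤ) ^ m - 1) :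
    (d : ℤ) ∣ (p : ℤ) - 1 := by
  -- d is coprime to p
  obtain ⟨c, hc⟩ := id h2
  have hcop : IsCoprime ((p : ℤ) ^ a) (d : ℤ) := by
    apply IsCoprime.pow_left
    exact ⟨(p : ℤ) ^ (m - 1), -c, by
      have : (p : ℤ) ^ (m - 1) * p = (p : ℤ) ^ m := by
        rw [← pow_succ, Nat.sub_add_cancel hm]
      linarith [hc]⟩
  have key : (d : ℤ) ∣ (p : ℤ) ^ (b - a) - 1 := by
    apply hcop.symm.dvd_of_dvd_mul_left
    have : (p : ℤ) ^ a * ((p : ℤ) ^ (b - a) - 1) = (p : ℤ) ^ b - (p : ℤ) ^ a := by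
      rw [mul_sub, ← pow_add, Nat.add_sub_cancel' hab, mul_one]
    rw [this]; exact h1
  exact aux_gcd_one p (b - a) m d hg key h2

theorem stmt_8 (p m : ℕ) (h k : ℕ) (v : ℤ) (hp : p.Prime) (hp5 : 5 ≤ p) (hm : 0 < m)
    (hhk : Int.gcd ((h : ℤ) + k) (m : ℤ) = 1) (hhk' : Int.gcd ((h : ℤ) - k) (m : ℤ) = 1)
    (hv : v * ((p : ℤ) ^ k + 1) ≡ (p : ℤ) ^ h + 1 [ZMOD (p : ℤ) ^ m - 1]) :
    (Int.gcd ((p : ℤ) ^ h - v) ((p : ℤ) ^ m - 1) ∣ p - 1) ∧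
    (Int.gcd (v - 1) ((p : ℤ) ^ m - 1) ∣ p - 1) := by
  have hp1 : 1 ≤ p := le_trans (by norm_num) hp5
  have hN : ((p : ℤ) ^ m - 1) ∣ ((p : ℤ) ^ h + 1) - v * ((p : ℤ) ^ k + 1) := hv.dvd
  have castdvd : ∀ d : ℕ, (d : ℤ) ∣ (p : ℤ) - 1 → d ∣ p - 1 := by
    intro d hd
    have : ((p : ℤ) - 1) = ((p - 1 : ℕ) : ℤ) := by push_cast [hp1]; ring
    rw [this] at hd
    exact_mod_cast hd
  constructor
  · set d := Int.gcd ((p : ℤ) ^ h - v) ((p : ℤ) ^ m - 1) with hd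
    have hd1 : (d : ℤ) ∣ (p : ℤ) ^ h - v := Int.gcd_dvd_left _ _
    have hd2 : (d : ℤ) ∣ (p : ℤ) ^ m - 1 := Int.gcd_dvd_right _ _
    have key : (d : ℤ) ∣ (p : ℤ) ^ (h + k) - 1 := by
      have e : (p : ℤ) ^ (h + k) - 1 =
          ((p : ℤ) ^ h - v) * ((p : ℤ) ^ k + 1) -
            (((p : ℤ) ^ h + 1) - v * ((p : ℤ) ^ k + 1)) := by
        rw [pow_add]; ring
      rw [e]
      exact dvd_sub (hd1.mul_right _) (hd2.trans hN)
    have hg : Nat.gcd (h + k) m = 1 := by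
      have : ((h : ℤ) + k) = ((h + k : ℕ) : ℤ) := by push_cast; ring
      rw [this, Int.gcd_natCast_natCast] at hhk
      exact hhk
    exact castdvd d (aux_gcd_one p (h + k) m d hg key hd2)
  · set d := Int.gcd (v - 1) ((p : ℤ) ^ m - 1) with hd
    have hd1 : (d : ℤ) ∣ v - 1 := Int.gcd_dvd_left _ _
    have hd2 : (d : ℤ) ∣ (p : ℤ) ^ m - 1 := Int.gcd_dvd_right _ _
    have key : (d : ℤ) ∣ (p : ℤ) ^ h - (p : ℤ) ^ k := by
      have e : (p : ℤ) ^ h - (p : ℤ) ^ k =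
          (v - 1) * ((p : ℤ) ^ k + 1) + (((p : ℤ) ^ h + 1) - v * ((p : ℤ) ^ k + 1)) := by
        ring
      rw [e]
      exact dvd_add (hd1.mul_right _) (hd2.trans hN)
    rcases le_total k h with hkh | hkh
    · have hg : Nat.gcd (h - k) m = 1 := by
        have : ((h : ℤ) - k) = ((h - k : ℕ) : ℤ) := by push_cast [hkh]; ring
        rw [this, Int.gcd_natCast_natCast] at hhk'
        exact hhk'
      exact castdvd d (aux_pow_sub p k h m d hm hkh hg key hd2)
    · have hg : Nat.gcd (k - h) m = 1 := by
        have : ((h : ℤ) - k) = -((k - h : ℕ) : ℤ) := by push_cast [hkh]; ring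
        rw [this, Int.neg_gcd, Int.gcd_natCast_natCast] at hhk'
        exact hhk'
      have key' : (d : ℤ) ∣ (p : ℤ) ^ k - (p : ℤ) ^ h := by
        rw [← neg_sub]; exact key.neg_right
      exact castdvd d (aux_pow_sub p h k m d hm hkh hg key' hd2)
end

section
/- Let p ≥ 5 be prime and m be an even positive integer with gcd(h, m) = 1 and gcd(h - k, m) = 1 for nonnegative integers h, k. Then there is no integer v satisfying v(p^k - 1) ≡ p^h - 1 (mod p^m - 1). -/
theorem stmt_11 (p m : ℕ) (h k : ℕ) (hp : p.Prime) (hp5 : 5 ≤ p) (hm : 0 < m)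
    (hme : Even m) (hh : Nat.gcd h m = 1) (hhk : Int.gcd ((h : ℤ) - k) (m : ℤ) = 1) :
    ¬ ∃ v : ℤ, v * ((p : ℤ) ^ k - 1) ≡ (p : ℤ) ^ h - 1 [ZMOD (p : ℤ) ^ m - 1] := by
  rintro ⟨v, hv⟩
  set q : ℤ := (p : ℤ) with hq
  have hq5 : (5 : ℤ) ≤ q := by rw [hq]; exact_mod_cast hp5
  -- h is odd
  have hodd : Odd h := by
    rcases Nat.even_or_odd h with he | ho
    · exfalso
      have : 2 ∣ Nat.gcd h m := Nat.dvd_gcd he.two_dvd hme.two_dvd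
      omega
    · exact ho
  -- k is even
  have hkeven : Even k := by
    rcases Nat.even_or_odd k with he | ho
    · exact he
    · exfalso
      obtain ⟨a, ha⟩ := hodd
      obtain ⟨b, hb⟩ := ho
      have h2 : (2:ℤ) ∣ (h:ℤ) - k := by
        refine ⟨(a:ℤ) - b, ?_⟩
        subst ha hb
        push_cast
        ring
      have hm2 : (2:ℤ) ∣ (m:ℤ) := by exact_mod_cast hme.two_dvd
      have := Int.dvd_gcd h2 hm2
      rw [hhk] at this
      norm_num at this
  -- p is odd
  have hpodd : Odd p := hp.odd_of_ne_two (by omega)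
  have hqodd : (2:ℤ) ∣ q + 1 := by
    obtain ⟨c, hc⟩ := hpodd
    refine ⟨(c:ℤ) + 1, ?_⟩
    rw [hq, hc]; push_cast; ring
  set d : ℤ := 2 * (q - 1) with hd
  have hd2 : d ∣ q ^ 2 - 1 := by
    obtain ⟨t, ht⟩ := hqodd
    exact ⟨t, by linear_combination (q - 1) * ht⟩
  have heven_dvd : ∀ e : ℕ, Even e → d ∣ q ^ e - 1 := by
    intro e ⟨s, hs⟩
    have h1 : (q ^ 2 - 1) ∣ (q ^ 2) ^ s - 1 ^ s := sub_dvd_pow_sub_pow _ _ _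
    have : q ^ e = (q ^ 2) ^ s := by rw [← pow_mul]; congr 1; omega
    rw [this]
    simpa using hd2.trans h1
  -- d ∣ q^h - q
  have hdh : d ∣ q ^ h - q := by
    obtain ⟨s, hs⟩ := hodd
    have h1 : d ∣ (q ^ 2) ^ s - 1 := by
      have := heven_dvd (2 * s) ⟨s, by ring⟩
      rwa [pow_mul] at this
    have h2 : q ^ h - q = q * ((q ^ 2) ^ s - 1) := by
      rw [hs, ← pow_mul]
      ring
    rw [h2]
    exact h1.mul_left q
  -- from the congruence
  have hmod : (q ^ m - 1) ∣ (q ^ h - 1) - v * (q ^ k - 1) := Int.ModEq.dvd hv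
  have hdm : d ∣ q ^ m - 1 := heven_dvd m hme
  have hdk : d ∣ v * (q ^ k - 1) := (heven_dvd k hkeven).mul_left v
  have hdh1 : d ∣ q ^ h - 1 := by
    have := (hdm.trans hmod)
    have h3 : q ^ h - 1 = ((q ^ h - 1) - v * (q ^ k - 1)) + v * (q ^ k - 1) := by ring
    rw [h3]
    exact dvd_add this hdk
  have hfin : d ∣ q - 1 := by
    have h4 : q - 1 = (q ^ h - 1) - (q ^ h - q) := by ring
    rw [h4]
    exact dvd_sub hdh1 hdh
  have hle := Int.le_of_dvd (by linarith) hfin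
  rw [hd] at hle
  linarith
end

section
/- Let p ≥ 5 be prime, m a positive integer, k a nonnegative integer with k < m, and suppose m/gcd(k, m) ≡ 0 (mod 4). Let v = (p^m - 1)/2 + p^k + 1. Then gcd(v, p^m - 1) = p^gcd(k,m) + 1. -/
lemma aux_pow_sub_one_dvd (p : ℕ) {a b : ℕ} (h : a ∣ b) : p ^ a - 1 ∣ p ^ b - 1 := by
  obtain ⟨c, rfl⟩ := h
  simpa [pow_mul] using Nat.sub_dvd_pow_sub_pow (p ^ a) 1 c

lemma aux_gcd_pow_sub_one (p : ℕ) (hp : 0 < p) (a b : ℕ) :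
    Nat.gcd (p ^ a - 1) (p ^ b - 1) = p ^ Nat.gcd a b - 1 := by
  induction a, b using Nat.gcd.induction with
  | H0 n => simp
  | H1 m n hm ih =>
    rw [Nat.gcd_rec m n, ← ih]
    obtain ⟨s, hs⟩ : p ^ m - 1 ∣ p ^ (m * (n / m)) - 1 := aux_pow_sub_one_dvd p ⟨n / m, rfl⟩
    obtain ⟨c, hc⟩ : ∃ c, p ^ (n % m) = c + 1 :=
      ⟨p ^ (n % m) - 1, by have := Nat.one_le_pow (n % m) p hp; omega⟩
    have hx : 1 ≤ p ^ (m * (n / m)) := Nat.one_le_pow _ _ hp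
    have h2 : p ^ (m * (n / m)) = (p ^ m - 1) * s + 1 := by omega
    have key : p ^ n - 1 = (p ^ (n % m) - 1) + (c * s + s) * (p ^ m - 1) := by
      have h1 : p ^ n = p ^ (n % m) * p ^ (m * (n / m)) := by
        rw [← pow_add]; congr 1; exact (Nat.mod_add_div n m).symm
      have h3 : (c + 1) * ((p ^ m - 1) * s + 1) = c + (c * s + s) * (p ^ m - 1) + 1 := by ring
      rw [h1, h2, hc, h3]
      omega
    rw [key, Nat.gcd_add_mul_right_right, Nat.gcd_comm]

lemma aux_dvd_gcd_mul {g m n : ℕ} (h : g ∣ m * n) : g ∣ Nat.gcd g m * n := by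
  rw [← Nat.gcd_mul_right]
  exact Nat.dvd_gcd (Dvd.intro n rfl) h

theorem stmt_12 (p m k : ℕ) (hp : p.Prime) (hp5 : 5 ≤ p) (hm : 0 < m) (hk : k < m)
    (h4 : m / Nat.gcd k m % 4 = 0) :
    Nat.gcd ((p ^ m - 1) / 2 + p ^ k + 1) (p ^ m - 1) = p ^ Nat.gcd k m + 1 := by
  have hp1 : 1 ≤ p := by omega
  have hpodd : p % 2 = 1 := by
    rcases Nat.mod_two_eq_zero_or_one p with h | h
    · exfalso
      have h2 : (2 : ℕ) ∣ p := Nat.dvd_of_mod_eq_zero h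
      have := (Nat.Prime.eq_one_or_self_of_dvd hp 2 h2)
      omega
    · exact h
  set d := Nat.gcd k m with hd
  have hd0 : 0 < d := Nat.gcd_pos_of_pos_right k hm
  have hdk : d ∣ k := Nat.gcd_dvd_left k m
  have hdm : d ∣ m := Nat.gcd_dvd_right k m
  obtain ⟨t, ht⟩ : 4 ∣ m / d := Nat.dvd_of_mod_eq_zero h4
  have hmd : d * (m / d) = m := Nat.mul_div_cancel' hdm
  have hk0 : 0 < k := by
    rcases Nat.eq_zero_or_pos k with rfl | h
    · exfalso
      have : d = m := by simp [hd]
      rw [this, Nat.div_self hm] at h4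
      omega
    · exact h
  have hdlek : d ≤ k := Nat.le_of_dvd hk0 hdk
  obtain ⟨u, hu⟩ := hdk
  have hku : k / d = u := by rw [hu]; exact Nat.mul_div_cancel_left u hd0
  have hcop : Nat.gcd (k / d) (m / d) = 1 := Nat.coprime_div_gcd_div_gcd hd0
  have huodd : u % 2 = 1 := by
    rcases Nat.mod_two_eq_zero_or_one u with h | h
    · exfalso
      have h2u : 2 ∣ u := Nat.dvd_of_mod_eq_zero h
      have h2m : 2 ∣ m / d := by rw [ht]; exact ⟨2 * t, by ring⟩
      have : 2 ∣ Nat.gcd (k / d) (m / d) := Nat.dvd_gcd (hku ▸ h2u) h2m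
      omega
    · exact h
  -- P = p ^ d, odd, write P = 2x+1
  obtain ⟨x, hx⟩ : ∃ x, p ^ d = 2 * x + 1 := by
    obtain ⟨y, hy⟩ : Odd (p ^ d) := (Nat.odd_iff.mpr hpodd).pow
    exact ⟨y, by omega⟩
  set q := p ^ d + 1 with hq
  have hq0 : 0 < q := by positivity
  -- 2*q ∣ p^(2d)-1
  have hsq : p ^ (2 * d) - 1 = (2 * x) * q := by
    have h1 : p ^ (2 * d) = p ^ d * p ^ d := by rw [two_mul, pow_add]
    have h2 : (2 * x + 1) * (2 * x + 1) = (2 * x) * ((2 * x + 1) + 1) + 1 := by ring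
    rw [h1, hx, hq, hx, h2]
    omega
  have h2q : 2 * q ∣ p ^ (2 * d) - 1 := ⟨x, by rw [hsq]; ring⟩
  -- 4*q ∣ p^(4d)-1
  have h4q : 4 * q ∣ p ^ (4 * d) - 1 := by
    refine ⟨x * (2 * x ^ 2 + 2 * x + 1), ?_⟩
    have h1 : p ^ (4 * d) = (p ^ d) ^ 4 := by rw [← pow_mul, mul_comm]
    have h2 : (2 * x + 1) ^ 4 = 4 * ((2 * x + 1) + 1) * (x * (2 * x ^ 2 + 2 * x + 1)) + 1 := by
      ring
    rw [h1, hx, hq, hx, h2]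
    omega
  -- 4*q ∣ N
  have h4dm : 4 * d ∣ m := by
    refine ⟨t, ?_⟩
    rw [← hmd, ht]; ring
  have hN4q : 4 * q ∣ p ^ m - 1 := h4q.trans (aux_pow_sub_one_dvd p h4dm)
  obtain ⟨r, hr⟩ := hN4q
  have hN2 : 2 ∣ p ^ m - 1 := ⟨2 * q * r, by rw [hr]; ring⟩
  have hNhalf : (p ^ m - 1) / 2 = 2 * q * r := by
    rw [hr, show 4 * q * r = 2 * q * r * 2 by ring, Nat.mul_div_cancel _ (by norm_num)]
  -- q ∣ p^k - p^d  and ¬ 2q ∣ p^k + 1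
  have hpdk : p ^ d ≤ p ^ k := Nat.pow_le_pow_right hp1 hdlek
  have h2qkd : 2 * q ∣ p ^ k - p ^ d := by
    obtain ⟨s, hs⟩ : ∃ s, u = 2 * s + 1 := ⟨u / 2, by omega⟩
    have h2dkd : 2 * d ∣ k - d := by
      refine ⟨s, ?_⟩
      apply Nat.sub_eq_of_eq_add
      rw [hu, hs]; ring
    have hdvd : 2 * q ∣ p ^ (k - d) - 1 := h2q.trans (aux_pow_sub_one_dvd p h2dkd)
    have heq : p ^ k - p ^ d = p ^ d * (p ^ (k - d) - 1) := by
      have h1 : p ^ d * p ^ (k - d) = p ^ k := by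
        rw [← pow_add]; congr 1; omega
      have h2 : 1 ≤ p ^ (k - d) := Nat.one_le_pow _ _ hp1
      have h3 : p ^ d * (p ^ (k - d) - 1) = p ^ d * p ^ (k - d) - p ^ d := by
        rw [Nat.mul_sub, mul_one]
      omega
    rw [heq]
    exact hdvd.mul_left _
  have hqa : q ∣ p ^ k + 1 := by
    have h1 : q ∣ p ^ k - p ^ d := (Dvd.intro_left 2 rfl).trans h2qkd
    have h2 : p ^ k + 1 = (p ^ k - p ^ d) + q := by rw [hq]; omega
    rw [h2]
    exact Nat.dvd_add h1 dvd_rfl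
  have hn2qa : ¬ 2 * q ∣ p ^ k + 1 := by
    intro h
    have h1 : 2 * q ∣ (p ^ k + 1) - (p ^ k - p ^ d) := Nat.dvd_sub h h2qkd
    have h2 : (p ^ k + 1) - (p ^ k - p ^ d) = q := by rw [hq]; omega
    rw [h2] at h1
    have := Nat.le_of_dvd hq0 h1
    omega
  -- the gcd
  set v := (p ^ m - 1) / 2 + p ^ k + 1 with hv
  set g := Nat.gcd v (p ^ m - 1) with hg
  have hgv : g ∣ v := Nat.gcd_dvd_left _ _
  have hgN : g ∣ p ^ m - 1 := Nat.gcd_dvd_right _ _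
  have hveq : v = 2 * q * r + (p ^ k + 1) := by rw [hv, hNhalf]; ring
  have hqv : q ∣ v := by
    rw [hveq]
    exact Nat.dvd_add ⟨2 * r, by ring⟩ hqa
  have hqN : q ∣ p ^ m - 1 := ⟨4 * r, by rw [hr]; ring⟩
  have hqg : q ∣ g := Nat.dvd_gcd hqv hqN
  have hn2qv : ¬ 2 * q ∣ v := by
    intro h
    have h1 : 2 * q ∣ v - 2 * q * r := Nat.dvd_sub h ⟨r, rfl⟩
    have h2 : v - 2 * q * r = p ^ k + 1 := by omega
    rw [h2] at h1
    exact hn2qa h1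
  -- g ∣ 2*(p^k+1)
  have hNdiv : 2 * ((p ^ m - 1) / 2) = p ^ m - 1 := Nat.mul_div_cancel' hN2
  have hg2a : g ∣ 2 * (p ^ k + 1) := by
    have h1 : g ∣ 2 * v := hgv.mul_left 2
    have h2 : 2 * v - (p ^ m - 1) = 2 * (p ^ k + 1) := by rw [hv]; omega
    have := Nat.dvd_sub h1 hgN
    rwa [h2] at this
  -- g ∣ 2*(p^(2k)-1)
  have hg2k : g ∣ 2 * (p ^ (2 * k) - 1) := by
    have h1 : 2 * (p ^ (2 * k) - 1) = (2 * (p ^ k + 1)) * (p ^ k - 1) := by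
      have e1 : p ^ (2 * k) = p ^ k * p ^ k := by rw [two_mul, pow_add]
      have e2 : 1 ≤ p ^ k := Nat.one_le_pow _ _ hp1
      have e3 : (2 * (p ^ k + 1)) * (p ^ k - 1) = 2 * ((p ^ k + 1) * p ^ k) - 2 * (p ^ k + 1) := by
        rw [Nat.mul_sub, mul_one]; ring_nf
      have e4 : (p ^ k + 1) * p ^ k = p ^ k * p ^ k + p ^ k := by ring
      omega
    rw [h1]
    exact hg2a.mul_right _
  -- gcd(2k, m) = 2d
  have hgcd2km : Nat.gcd (2 * k) m = 2 * d := by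
    apply Nat.dvd_antisymm
    · have h1 : Nat.gcd (2 * k) m ∣ Nat.gcd (2 * k) (2 * m) :=
        Nat.dvd_gcd (Nat.gcd_dvd_left _ _) ((Nat.gcd_dvd_right _ _).trans ⟨2, by ring⟩)
      rwa [Nat.gcd_mul_left] at h1
    · exact Nat.dvd_gcd (mul_dvd_mul_left 2 ⟨u, hu⟩)
        ⟨2 * t, by rw [← hmd, ht]; ring⟩
  -- g ∣ 2*(p^(2d)-1)
  have hg2d : g ∣ 2 * (p ^ (2 * d) - 1) := by
    have h1 : g ∣ Nat.gcd (2 * (p ^ (2 * k) - 1)) (2 * (p ^ m - 1)) :=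
      Nat.dvd_gcd hg2k (hgN.mul_left 2)
    rwa [Nat.gcd_mul_left, aux_gcd_pow_sub_one p hp1, hgcd2km] at h1
  -- g ∣ 4*q
  have hg4q : g ∣ 4 * q := by
    have h1 : g ∣ (2 * (2 * x)) * q := by
      have : 2 * (p ^ (2 * d) - 1) = (2 * (2 * x)) * q := by rw [hsq]; ring
      rwa [this] at hg2d
    have h2 : g ∣ Nat.gcd g (2 * (2 * x)) * q := aux_dvd_gcd_mul h1
    have h3 : Nat.gcd g (2 * (2 * x)) ∣ 4 := by
      have e0 : 2 * x = p ^ d - 1 := by omega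
      have c1 : Nat.gcd (p ^ k + 1) (p ^ d - 1) ∣ 2 := by
        have d1 : Nat.gcd (p ^ k + 1) (p ^ d - 1) ∣ p ^ k - 1 :=
          (Nat.gcd_dvd_right _ _).trans (aux_pow_sub_one_dvd p ⟨u, hu⟩)
        have d2 : Nat.gcd (p ^ k + 1) (p ^ d - 1) ∣ p ^ k + 1 := Nat.gcd_dvd_left _ _
        have d3 := Nat.dvd_sub d2 d1
        have e2 : 1 ≤ p ^ k := Nat.one_le_pow _ _ hp1
        have e3 : (p ^ k + 1) - (p ^ k - 1) = 2 := by omega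
        rwa [e3] at d3
      have c2 : Nat.gcd g (2 * (2 * x)) ∣ Nat.gcd (2 * (p ^ k + 1)) (2 * (p ^ d - 1)) := by
        refine Nat.dvd_gcd ((Nat.gcd_dvd_left _ _).trans hg2a) ?_
        rw [← e0]
        exact (Nat.gcd_dvd_right _ _).trans ⟨1, by ring⟩
      rw [Nat.gcd_mul_left] at c2
      exact c2.trans (by exact mul_dvd_mul_left 2 c1)
    exact h2.trans (mul_dvd_mul_right h3 q)
  -- conclude
  obtain ⟨w, hw⟩ := hqg
  have hN0 : 0 < p ^ m - 1 := by
    have h5 : 5 ≤ p ^ m := le_trans hp5 (Nat.le_self_pow (by omega) p)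
    omega
  have hg0 : 0 < g := Nat.gcd_pos_of_pos_right _ hN0
  have hw0 : 0 < w := by
    rcases Nat.eq_zero_or_pos w with rfl | h
    · rw [hw, mul_zero] at hg0; omega
    · exact h
  have hw4 : w ∣ 4 := by
    have h1 : q * w ∣ q * 4 := by rw [← hw]; exact hg4q.trans ⟨1, by ring⟩
    exact (mul_dvd_mul_iff_left (by omega : q ≠ 0)).mp h1
  have hwle : w ≤ 4 := Nat.le_of_dvd (by norm_num) hw4
  have hnot2 : ¬ 2 ∣ w := by
    intro h2w
    obtain ⟨w', rfl⟩ := h2w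
    exact hn2qv (dvd_trans ⟨w', by rw [hw]; ring⟩ hgv)
  interval_cases w
  · rw [hw, mul_one]
  · exact absurd ⟨1, rfl⟩ hnot2
  · norm_num at hw4
  · exact absurd ⟨2, rfl⟩ hnot2
end

section
/- Let p ≥ 5 be prime, m a positive integer, k < m a nonnegative integer with m/gcd(k, m) ≡ 0 (mod 4), u = (p^m + 1)/2, and v = (p^m - 1)/2 + p^k + 1. Then there is no integer i with 0 ≤ i < m such that v ≡ p^i · u (mod p^m - 1). -/
theorem stmt_13 (p m k : ℕ) (hp : p.Prime) (hp5 : 5 ≤ p) (hm : 0 < m) (hk : k < m)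
    (h4 : m / Nat.gcd k m % 4 = 0) :
    ¬ ∃ i : ℕ, i < m ∧
      (p ^ m - 1) / 2 + p ^ k + 1 ≡ p ^ i * ((p ^ m + 1) / 2) [MOD p ^ m - 1] := by
  rintro ⟨i, hi, hmod⟩
  have hodd : Odd p := hp.odd_of_ne_two (by omega)
  have hoddm : Odd (p ^ m) := hodd.pow
  have hpm1 : 1 ≤ p ^ m := Nat.one_le_pow _ _ (by omega)
  have hdvd1 : 2 ∣ p ^ m - 1 := by
    rcases hoddm with ⟨t, ht⟩; omega
  have hdvd2 : 2 ∣ p ^ m + 1 := by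
    rcases hoddm with ⟨t, ht⟩; omega
  have hmod2 := hmod.mul_left 2
  have e1 : 2 * ((p ^ m - 1) / 2 + p ^ k + 1) = (p ^ m - 1) + 2 * p ^ k + 2 := by
    rw [Nat.mul_add, Nat.mul_add, Nat.mul_div_cancel' hdvd1]
  have e2 : 2 * (p ^ i * ((p ^ m + 1) / 2)) = p ^ i * (p ^ m + 1) := by
    rw [← Nat.mul_assoc, Nat.mul_comm 2 (p ^ i), Nat.mul_assoc,
      Nat.mul_div_cancel' hdvd2]
  rw [e1, e2] at hmod2
  have h := (Nat.modEq_iff_dvd).mp hmod2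
  push_cast [hpm1] at h
  set P : ℤ := (p : ℤ) with hP
  have hP5 : (5 : ℤ) ≤ P := by rw [hP]; exact_mod_cast hp5
  set Q : ℤ := P ^ (m - 1) with hQ
  have hPm : P ^ m = P * Q := by
    rw [hQ, ← pow_succ']
    congr 1
    omega
  have h2 : (P ^ m - 1) ∣ 2 * (P ^ i - P ^ k - 1) := by
    have hd : (P ^ m - 1) ∣ (P ^ m - 1) * (P ^ i - 1) := dvd_mul_right _ _
    have := dvd_sub h hd
    have he : P ^ i * (P ^ m + 1) - (P ^ m - 1 + 2 * P ^ k + 2)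
        - (P ^ m - 1) * (P ^ i - 1) = 2 * (P ^ i - P ^ k - 1) := by ring
    rwa [he] at this
  have hQ1 : (1 : ℤ) ≤ Q := by have := pow_pos (show (0:ℤ) < P by linarith) (m-1); omega
  have hQi : P ^ i ≤ Q := pow_le_pow_right₀ (by linarith) (by omega)
  have hQk : P ^ k ≤ Q := pow_le_pow_right₀ (by linarith) (by omega)
  have hi1 : (1 : ℤ) ≤ P ^ i := by have := pow_pos (show (0:ℤ) < P by linarith) i; omega
  have hk1 : (1 : ℤ) ≤ P ^ k := by have := pow_pos (show (0:ℤ) < P by linarith) k; omega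
  have habs : |2 * (P ^ i - P ^ k - 1)| < P ^ m - 1 := by
    rw [abs_lt]
    constructor <;> nlinarith
  have hD : 2 * (P ^ i - P ^ k - 1) = 0 := Int.eq_zero_of_abs_lt_dvd h2 habs
  have hEq : P ^ i = P ^ k + 1 := by linarith
  have hEqN : p ^ i = p ^ k + 1 := by rw [hP] at hEq; exact_mod_cast hEq
  rcases Nat.eq_zero_or_pos i with hi0 | hi0
  · rw [hi0, pow_zero] at hEqN
    have := pow_pos (show 0 < p by omega) k
    omega
  · have hpi : p ∣ p ^ i := dvd_pow_self p (by omega)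
    rw [hEqN] at hpi
    rcases Nat.eq_zero_or_pos k with hk0 | hk0
    · simp [hk0] at hpi
      have := Nat.le_of_dvd (by norm_num) hpi
      omega
    · have hpk : p ∣ p ^ k := dvd_pow_self p (by omega)
      have : p ∣ 1 := (Nat.dvd_add_right hpk).mp hpi
      have := Nat.le_of_dvd one_pos this
      omega
end

section
/- Let p ≥ 5 be prime, m a positive integer, k < m with m/gcd(k, m) ≡ 0 (mod 4), and v = (p^m - 1)/2 + p^k + 1. Then the p-cyclotomic coset of v modulo p^m - 1 has size exactly m. -/
set_option maxHeartbeats 1000000 in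
theorem stmt_14 (p m k : ℕ) (hp : p.Prime) (hp5 : 5 ≤ p) (hm : 0 < m) (hk : k < m)
    (h4 : m / Nat.gcd k m % 4 = 0) :
    IsLeast {l : ℕ | 0 < l ∧
      ((p ^ m - 1) / 2 + p ^ k + 1) * p ^ l ≡ (p ^ m - 1) / 2 + p ^ k + 1 [MOD p ^ m - 1]} m := by
  have hp1 : 1 < p := by omega
  have hpm1 : 1 ≤ p ^ m := Nat.one_le_pow _ _ (by omega)
  constructor
  · refine ⟨hm, ?_⟩
    have h1 : p ^ m ≡ 1 [MOD p ^ m - 1] := ((Nat.modEq_iff_dvd' hpm1).mpr dvd_rfl).symm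
    have h2 := (Nat.ModEq.refl ((p ^ m - 1) / 2 + p ^ k + 1)).mul h1
    simpa using h2
  · rintro l ⟨hl, hmod⟩
    by_contra hlt
    push_neg at hlt
    have hpodd : Odd p := hp.odd_of_ne_two (by omega)
    have hpl1 : 1 ≤ p ^ l := Nat.one_le_pow _ _ (by omega)
    have hpk1 : 1 ≤ p ^ k := Nat.one_le_pow _ _ (by omega)
    obtain ⟨c, hcc⟩ := Nat.Odd.sub_odd (Odd.pow hpodd (n := m)) odd_one
    obtain ⟨d, hdd⟩ := Nat.Odd.sub_odd (Odd.pow hpodd (n := l)) odd_one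
    have hc2 : p ^ m - 1 = 2 * c := by omega
    have hd2 : p ^ l = 2 * d + 1 := by omega
    have hv : (p ^ m - 1) / 2 + p ^ k + 1 = c + p ^ k + 1 := by omega
    rw [hv] at hmod
    have hle : c + p ^ k + 1 ≤ (c + p ^ k + 1) * p ^ l :=
      Nat.le_mul_of_pos_right _ (by omega)
    have hdvd0 : (p ^ m - 1) ∣ (c + p ^ k + 1) * p ^ l - (c + p ^ k + 1) :=
      (Nat.modEq_iff_dvd' hle).mp hmod.symm
    have hkey : (c + p ^ k + 1) * p ^ l =
        (c + p ^ k + 1) + ((p ^ m - 1) * d + (p ^ k + 1) * (2 * d)) := by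
      rw [hc2, hd2]; ring
    rw [hkey, Nat.add_sub_cancel_left] at hdvd0
    have hdvd : (p ^ m - 1) ∣ (p ^ k + 1) * (2 * d) :=
      (Nat.dvd_add_right (dvd_mul_right _ d)).mp hdvd0
    rcases Nat.lt_or_ge (k + l) m with hcase | hcase
    · -- k + l < m : the quantity is strictly between 0 and p^m - 1
      have hplp : p ≤ p ^ l := by
        calc p = p ^ 1 := (pow_one p).symm
        _ ≤ p ^ l := Nat.pow_le_pow_right (by omega) hl
      have hpos : 0 < (p ^ k + 1) * (2 * d) := Nat.mul_pos (by omega) (by omega)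
      have hled : 2 * c ≤ (p ^ k + 1) * (2 * d) := by
        have := Nat.le_of_dvd hpos hdvd
        omega
      have hb1 : p ^ k + 1 ≤ p ^ (k + 1) := by
        have h5 : p ^ (k + 1) = p * p ^ k := by ring
        nlinarith
      have he1 : (p ^ k + 1) * (2 * d + 1) = (p ^ k + 1) * (2 * d) + (p ^ k + 1) := by ring
      have he2 : (p ^ k + 1) * (2 * d + 1) ≤ p ^ (k + 1) * (2 * d + 1) :=
        Nat.mul_le_mul_right _ hb1
      have he3 : p ^ (k + 1) * (2 * d + 1) = p ^ (k + l + 1) := by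
        rw [← hd2, ← pow_add]; congr 1; omega
      have he5 : p ^ (k + l + 1) ≤ p ^ m := Nat.pow_le_pow_right (by omega) (by omega)
      have hpm : p ^ m = 2 * c + 1 := by omega
      linarith
    · -- k + l ≥ m : work over ℤ
      have hk1 : 1 ≤ k := by omega
      have hm2 : 2 ≤ m := by omega
      set t := k + l - m with ht
      have hklm : k + l = t + m := by omega
      have htk : t + 1 ≤ k := by omega
      -- integer versions
      have hpmZ : (p : ℤ) ^ m = 2 * c + 1 := by exact_mod_cast (by omega : p ^ m = 2 * c + 1)
      have hplZ : (p : ℤ) ^ l = 2 * d + 1 := by exact_mod_cast hd2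
      have h1 : ((p : ℤ) ^ m - 1) ∣ ((p : ℤ) ^ k + 1) * ((p : ℤ) ^ l - 1) := by
        rw [hpmZ, hplZ]
        have : ((2 : ℤ) * c) ∣ ((p : ℤ) ^ k + 1) * (2 * d) := by
          rw [hc2] at hdvd; exact_mod_cast hdvd
        simpa using this
      have hpow : (p : ℤ) ^ k * (p : ℤ) ^ l = (p : ℤ) ^ t * (p : ℤ) ^ m := by
        rw [← pow_add, ← pow_add, hklm]
      have heq : ((p : ℤ) ^ k + 1) * ((p : ℤ) ^ l - 1) - (p : ℤ) ^ t * ((p : ℤ) ^ m - 1) =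
          (p : ℤ) ^ t + (p : ℤ) ^ l - (p : ℤ) ^ k - 1 := by linear_combination hpow
      have hdvdZ : ((p : ℤ) ^ m - 1) ∣ ((p : ℤ) ^ t + (p : ℤ) ^ l - (p : ℤ) ^ k - 1) :=
        heq ▸ (dvd_sub h1 (dvd_mul_left _ _))
      -- bounds
      have hb0 : (1 : ℤ) ≤ (p : ℤ) ^ (m - 2) := by
        exact_mod_cast Nat.one_le_pow (m - 2) p (by omega)
      have hb8 : (5 : ℤ) ≤ (p : ℤ) := by exact_mod_cast hp5
      have hbt : (p : ℤ) ^ t ≤ (p : ℤ) ^ (m - 2) := by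
        exact_mod_cast Nat.pow_le_pow_right (by omega) (by omega : t ≤ m - 2)
      have hbl : (p : ℤ) ^ l ≤ (p : ℤ) ^ (m - 1) := by
        exact_mod_cast Nat.pow_le_pow_right (by omega) (by omega : l ≤ m - 1)
      have hbk : (p : ℤ) ^ k ≤ (p : ℤ) ^ (m - 1) := by
        exact_mod_cast Nat.pow_le_pow_right (by omega) (by omega : k ≤ m - 1)
      have hbt1 : (1 : ℤ) ≤ (p : ℤ) ^ t := by
        exact_mod_cast Nat.one_le_pow t p (by omega)
      have hbl1 : (1 : ℤ) ≤ (p : ℤ) ^ l := by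
        exact_mod_cast Nat.one_le_pow l p (by omega)
      have hbk5 : (5 : ℤ) ≤ (p : ℤ) ^ k := by
        have : p ^ 1 ≤ p ^ k := Nat.pow_le_pow_right (by omega) hk1
        have : p ≤ p ^ k := by simpa using this
        exact_mod_cast le_trans hp5 this
      have he1 : (p : ℤ) ^ m = (p : ℤ) ^ (m - 2) * (p : ℤ) ^ 2 := by
        rw [← pow_add]; congr 1; omega
      have he2 : (p : ℤ) ^ (m - 1) = (p : ℤ) ^ (m - 2) * (p : ℤ) := by
        rw [← pow_succ]; congr 1; omega
      have hq : (20 : ℤ) ≤ (p : ℤ) ^ 2 - (p : ℤ) := by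
        have hpp : (5 : ℤ) * (p : ℤ) ≤ (p : ℤ) * (p : ℤ) :=
          mul_le_mul_of_nonneg_right hb8 (by linarith)
        rw [pow_two]; linarith
      have hnn : (0 : ℤ) ≤ ((p : ℤ) ^ (m - 2) - 1) * ((p : ℤ) ^ 2 - (p : ℤ) - 20) := by
        have ha : (0 : ℤ) ≤ (p : ℤ) ^ (m - 2) - 1 := by linarith
        have hb : (0 : ℤ) ≤ (p : ℤ) ^ 2 - (p : ℤ) - 20 := by linarith
        exact mul_nonneg ha hb
      have key : (19 : ℤ) ≤ (p : ℤ) ^ (m - 2) * (p : ℤ) ^ 2 - (p : ℤ) ^ (m - 2) * (p : ℤ) -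
          (p : ℤ) ^ (m - 2) := by nlinarith [hnn, hq, hb0]
      have habs : |(p : ℤ) ^ t + (p : ℤ) ^ l - (p : ℤ) ^ k - 1| < (p : ℤ) ^ m - 1 := by
        rw [abs_lt]
        constructor
        · linarith
        · linarith
      have hx0 : (p : ℤ) ^ t + (p : ℤ) ^ l - (p : ℤ) ^ k - 1 = 0 :=
        Int.eq_zero_of_abs_lt_dvd hdvdZ habs
      rcases Nat.eq_zero_or_pos t with ht0 | htpos
      · -- t = 0 forces l = k and m = 2k, contradicting h4
        have hplk : (p : ℤ) ^ l = (p : ℤ) ^ k := by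
          rw [ht0] at hx0; simp at hx0; linarith
        have hlk : l = k := Nat.pow_right_injective (a := p) (by omega) (by exact_mod_cast hplk)
        have hm2k : m = 2 * k := by omega
        have hgcd : Nat.gcd k m = k := Nat.gcd_eq_left ⟨2, by omega⟩
        have hdiv : 2 * k / k = 2 := Nat.mul_div_cancel 2 (by omega : 0 < k)
        rw [hgcd, hm2k, hdiv] at h4
        omega
      · -- t ≥ 1 : p divides 1
        have hdp : (p : ℤ) ∣ 1 := by
          have h1' : (p : ℤ) ∣ (p : ℤ) ^ t := dvd_pow_self _ (by omega)
          have h2' : (p : ℤ) ∣ (p : ℤ) ^ l := dvd_pow_self _ (by omega)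
          have h3' : (p : ℤ) ∣ (p : ℤ) ^ k := dvd_pow_self _ (by omega)
          have hrw : (1 : ℤ) = (p : ℤ) ^ t + (p : ℤ) ^ l - (p : ℤ) ^ k := by linarith
          rw [hrw]; exact dvd_sub (dvd_add h1' h2') h3'
        have := Int.le_of_dvd one_pos hdp
        linarith
end

section
/- Let p be an odd prime, m a positive integer, and k a nonnegative integer. In the field F_{p^m}, for any nonzero b_1, b_2 in the prime subfield F_p with b_1 + b_2 = -1 and any y in F_{p^m} with x = -(b_1 + b_2 y), the identity x^{p^k+1} + b_1 + b_2 y^{p^k+1} = -b_1 b_2 (y - 1)^{p^k+1} holds. -/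
theorem stmt_15 (p m k : ℕ) [Fact p.Prime] (hodd : Odd p) (hm : 0 < m)
    (b₁ b₂ : ZMod p) (hb₁ : b₁ ≠ 0) (hb₂ : b₂ ≠ 0) (hsum : b₁ + b₂ = -1)
    (y x : GaloisField p m)
    (hx : x = -(algebraMap (ZMod p) (GaloisField p m) b₁ +
      algebraMap (ZMod p) (GaloisField p m) b₂ * y)) :
    x ^ (p ^ k + 1) + algebraMap (ZMod p) (GaloisField p m) b₁ +
        algebraMap (ZMod p) (GaloisField p m) b₂ * y ^ (p ^ k + 1) =
      -(algebraMap (ZMod p) (GaloisField p m) b₁ *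
        algebraMap (ZMod p) (GaloisField p m) b₂) * (y - 1) ^ (p ^ k + 1) := by
  subst hx
  set B₁ := algebraMap (ZMod p) (GaloisField p m) b₁ with hB1def
  set B₂ := algebraMap (ZMod p) (GaloisField p m) b₂ with hB2def
  have hB₁ : B₁ ^ p ^ k = B₁ := by rw [hB1def, ← map_pow, ZMod.pow_card_pow]
  have hB₂ : B₂ ^ p ^ k = B₂ := by rw [hB2def, ← map_pow, ZMod.pow_card_pow]
  have hsum' : B₁ + B₂ = -1 := by
    rw [hB1def, hB2def, ← map_add, hsum, map_neg, map_one]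
  have hoddpk : Odd (p ^ k) := hodd.pow
  rw [pow_succ, pow_succ, pow_succ, hoddpk.neg_pow, add_pow_char_pow, mul_pow,
    hB₁, hB₂, sub_pow_char_pow, one_pow]
  linear_combination (B₁ + B₂ * y ^ p ^ k * y) * hsum'
end
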